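/- Let H_c be the rational Cherednik algebra at t = 0 attached to the complex reflection group W ⊂ GL(h) and parameter c. Then the image in H_c of every W-invariant polynomial p ∈ Sym(h)^W = ℂ[h*]^W lies in the center of H_c, and likewise the image of every W-invariant polynomial q ∈ Sym(h*)^W = ℂ[h]^W lies in the center of H_c. -/

import Mathlib

noncomputable section

variable {h : Type*} [AddCommGroup h] [Module ℂ h]

/-- The free algebra on generators `h ⊕ h* ⊕ W` used to present the rational
Cherednik algebra at `t = 0`. -/
abbrev CherFree (h : Type*) [AddCommGroup h] [Module ℂ h]
    (W : Subgroup (h ≃ₗ[ℂ] h)) :=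
  FreeAlgebra ℂ (h ⊕ (Module.Dual ℂ h ⊕ ↥W))

/-- The generator of the free algebra corresponding to `v ∈ h`. -/
def genX (W : Subgroup (h ≃ₗ[ℂ] h)) (v : h) : CherFree h W :=
  FreeAlgebra.ι ℂ (Sum.inl v)

/-- The generator of the free algebra corresponding to `f ∈ h*`. -/
def genY (W : Subgroup (h ≃ₗ[ℂ] h)) (f : Module.Dual ℂ h) : CherFree h W :=
  FreeAlgebra.ι ℂ (Sum.inr (Sum.inl f))

/-- The generator of the free algebra corresponding to `w ∈ W`. -/
def genG (W : Subgroup (h ≃ₗ[ℂ] h)) (w : ↥W) : CherFree h W :=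
  FreeAlgebra.ι ℂ (Sum.inr (Sum.inr w))

/-- The defining relations of the rational Cherednik algebra `H_c` at `t = 0`:
linearity of the generators from `h` and `h*`, the group relations of `W`,
commutativity among the `h`-generators and among the `h*`-generators, the
`W`-semidirect product relations, and the principal commutation relation
`x·y − y·x = Σ_{s ∈ S} c_s·(y(α_s)·α_s^∨(x)/α_s^∨(α_s))·s`. -/
inductive CherednikRel (W : Subgroup (h ≃ₗ[ℂ] h)) (S : Finset ↥W)
    (α : ↥W → h) (αv : ↥W → Module.Dual ℂ h) (c : ↥W → ℂ) :
    CherFree h W → CherFree h W → Prop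
  | x_add (v v' : h) :
      CherednikRel W S α αv c (genX W (v + v')) (genX W v + genX W v')
  | x_smul (a : ℂ) (v : h) :
      CherednikRel W S α αv c (genX W (a • v)) (a • genX W v)
  | y_add (f f' : Module.Dual ℂ h) :
      CherednikRel W S α αv c (genY W (f + f')) (genY W f + genY W f')
  | y_smul (a : ℂ) (f : Module.Dual ℂ h) :
      CherednikRel W S α αv c (genY W (a • f)) (a • genY W f)
  | g_mul (w w' : ↥W) :
      CherednikRel W S α αv c (genG W (w * w')) (genG W w * genG W w')
  | g_one :
      CherednikRel W S α αv c (genG W 1) 1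
  | x_comm (v v' : h) :
      CherednikRel W S α αv c (genX W v * genX W v') (genX W v' * genX W v)
  | y_comm (f f' : Module.Dual ℂ h) :
      CherednikRel W S α αv c (genY W f * genY W f') (genY W f' * genY W f)
  | g_x (w : ↥W) (v : h) :
      CherednikRel W S α αv c (genG W w * genX W v)
        (genX W ((w : h ≃ₗ[ℂ] h) v) * genG W w)
  | g_y (w : ↥W) (f : Module.Dual ℂ h) :
      CherednikRel W S α αv c (genG W w * genY W f)
        (genY W (f ∘ₗ ((w : h ≃ₗ[ℂ] h).symm : h →ₗ[ℂ] h)) * genG W w)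
  | main (v : h) (f : Module.Dual ℂ h) :
      CherednikRel W S α αv c (genX W v * genY W f - genY W f * genX W v)
        (∑ s ∈ S, (c s * (f (α s) * αv s v / αv s (α s))) • genG W s)

/-- The rational Cherednik algebra at `t = 0` attached to `W` and the
parameter `c`, presented by generators and relations. -/
abbrev CherednikAlgebra (W : Subgroup (h ≃ₗ[ℂ] h)) (S : Finset ↥W)
    (α : ↥W → h) (αv : ↥W → Module.Dual ℂ h) (c : ↥W → ℂ) :=
  RingQuot (CherednikRel W S α αv c)

/-- The image of `v ∈ h` in the Cherednik algebra. -/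
def elX (W : Subgroup (h ≃ₗ[ℂ] h)) (S : Finset ↥W)
    (α : ↥W → h) (αv : ↥W → Module.Dual ℂ h) (c : ↥W → ℂ) (v : h) :
    CherednikAlgebra W S α αv c :=
  RingQuot.mkAlgHom ℂ (CherednikRel W S α αv c) (genX W v)

/-- The image of `f ∈ h*` in the Cherednik algebra. -/
def elY (W : Subgroup (h ≃ₗ[ℂ] h)) (S : Finset ↥W)
    (α : ↥W → h) (αv : ↥W → Module.Dual ℂ h) (c : ↥W → ℂ) (f : Module.Dual ℂ h) :
    CherednikAlgebra W S α αv c :=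
  RingQuot.mkAlgHom ℂ (CherednikRel W S α αv c) (genY W f)

/-- The image of `w ∈ W` in the Cherednik algebra. -/
def elG (W : Subgroup (h ≃ₗ[ℂ] h)) (S : Finset ↥W)
    (α : ↥W → h) (αv : ↥W → Module.Dual ℂ h) (c : ↥W → ℂ) (w : ↥W) :
    CherednikAlgebra W S α αv c :=
  RingQuot.mkAlgHom ℂ (CherednikRel W S α αv c) (genG W w)

/-- The symmetry relation on the tensor algebra, whose `RingQuot` is the
symmetric algebra `SymmAlg R M`. -/
inductive SymRel (R : Type*) [CommRing R] (M : Type*) [AddCommGroup M] [Module R M] :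
    TensorAlgebra R M → TensorAlgebra R M → Prop
  | comm (x y : M) : SymRel R M (TensorAlgebra.ι R x * TensorAlgebra.ι R y)
      (TensorAlgebra.ι R y * TensorAlgebra.ι R x)

/-- The symmetric algebra `Sym(M)` of a module, realised as the quotient of the
tensor algebra by the symmetry relation. -/
abbrev SymmAlg (R : Type*) [CommRing R] (M : Type*) [AddCommGroup M] [Module R M] :=
  RingQuot (SymRel R M)

/-- The canonical linear map `M → Sym(M)`. -/
def symι (R : Type*) [CommRing R] (M : Type*) [AddCommGroup M] [Module R M] :
    M →ₗ[R] SymmAlg R M :=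
  (RingQuot.mkAlgHom R (SymRel R M)).toLinearMap ∘ₗ TensorAlgebra.ι R

/-- A complex reflection on `h`: an element of `GL(h)` of finite order whose
fixed subspace is a hyperplane (has codimension one). -/
def IsComplexReflection {h : Type*} [AddCommGroup h] [Module ℂ h] (s : h ≃ₗ[ℂ] h) : Prop :=
  IsOfFinOrder s ∧
    Module.finrank ℂ ↥(LinearMap.ker (s.toLinearMap - LinearMap.id)) + 1 =
      Module.finrank ℂ h


namespace CherednikAux

section symm
variable {R : Type*} [CommRing R] {M : Type*} [AddCommGroup M] [Module R M]

lemma SymmAlg.induction {motive : SymmAlg R M → Prop}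
    (halg : ∀ r : R, motive (algebraMap R (SymmAlg R M) r))
    (hι : ∀ m : M, motive (symι R M m))
    (hmul : ∀ a b, motive a → motive b → motive (a * b))
    (hadd : ∀ a b, motive a → motive b → motive (a + b))
    (a : SymmAlg R M) : motive a := by
  obtain ⟨a, rfl⟩ := RingQuot.mkAlgHom_surjective R (SymRel R M) a
  induction a using TensorAlgebra.induction with
  | algebraMap r => simpa using halg r
  | ι x => exact hι x
  | mul a b ha hb => rw [map_mul]; exact hmul _ _ ha hb
  | add a b ha hb => rw [map_add]; exact hadd _ _ ha hb

lemma SymmAlg.ι_comm (x : M) (b : SymmAlg R M) :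
    symι R M x * b = b * symι R M x := by
  induction b using SymmAlg.induction with
  | halg r => exact (Algebra.commutes r _).symm
  | hι y =>
    have := RingQuot.mkAlgHom_rel R (SymRel.comm (R := R) x y)
    simp only [map_mul] at this; exact this
  | hmul a b ha hb => rw [← mul_assoc, ha, mul_assoc, hb, mul_assoc]
  | hadd a b ha hb => rw [mul_add, add_mul, ha, hb]

lemma SymmAlg.mul_comm (a b : SymmAlg R M) : a * b = b * a := by
  induction a using SymmAlg.induction with
  | halg r => exact Algebra.commutes r b
  | hι x => exact SymmAlg.ι_comm x b
  | hmul p q hp hq => rw [mul_assoc, hq, ← mul_assoc, hp, mul_assoc]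
  | hadd p q hp hq => rw [add_mul, mul_add, hp, hq]

noncomputable instance : CommRing (SymmAlg R M) :=
  { (inferInstance : Ring (SymmAlg R M)) with mul_comm := SymmAlg.mul_comm }

end symm

section domain
variable {M : Type*} [AddCommGroup M] [Module ℂ M]

noncomputable def toPoly : SymmAlg ℂ M →ₐ[ℂ] MvPolynomial (Module.Basis.ofVectorSpaceIndex ℂ M) ℂ :=
  RingQuot.liftAlgHom ℂ
    ⟨TensorAlgebra.lift ℂ
      ((Finsupp.linearCombination ℂ (fun i => (MvPolynomial.X i : MvPolynomial (Module.Basis.ofVectorSpaceIndex ℂ M) ℂ))).comp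
        (Module.Basis.ofVectorSpace ℂ M).repr.toLinearMap),
     by rintro _ _ ⟨x, y⟩; simp [mul_comm]⟩

lemma toPoly_symι (m : M) :
    toPoly (symι ℂ M m) =
      Finsupp.linearCombination ℂ (fun i => (MvPolynomial.X i : MvPolynomial (Module.Basis.ofVectorSpaceIndex ℂ M) ℂ))
        ((Module.Basis.ofVectorSpace ℂ M).repr m) := by
  simp [toPoly, symι, RingQuot.liftAlgHom_mkAlgHom_apply]

noncomputable def fromPoly : MvPolynomial (Module.Basis.ofVectorSpaceIndex ℂ M) ℂ →ₐ[ℂ] SymmAlg ℂ M :=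
  MvPolynomial.aeval (fun i => symι ℂ M (Module.Basis.ofVectorSpace ℂ M i))

lemma fromPoly_toPoly (a : SymmAlg ℂ M) : fromPoly (toPoly a) = a := by
  induction a using SymmAlg.induction with
  | halg r => simp [AlgHom.commutes]
  | hι m =>
    rw [toPoly_symι, Finsupp.linearCombination_apply, Finsupp.sum, map_sum]
    simp only [map_smul, fromPoly, MvPolynomial.aeval_X]
    simp_rw [← map_smul (symι ℂ M), ← map_sum]
    have h2 := (Module.Basis.ofVectorSpace ℂ M).linearCombination_repr m
    rw [Finsupp.linearCombination_apply, Finsupp.sum] at h2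
    rw [h2]
  | hmul a b ha hb => rw [map_mul, map_mul, ha, hb]
  | hadd a b ha hb => rw [map_add, map_add, ha, hb]

lemma toPoly_symι_ne_zero {m : M} (hm : m ≠ 0) : toPoly (symι ℂ M m) ≠ 0 := by
  intro hzero
  apply hm
  have hrepr : (Module.Basis.ofVectorSpace ℂ M).repr m = 0 := by
    ext i
    have := congrArg (MvPolynomial.coeff (Finsupp.single i 1)) hzero
    rw [toPoly_symι, Finsupp.linearCombination_apply, Finsupp.sum] at this
    classical
    rw [MvPolynomial.coeff_sum] at this
    simp only [MvPolynomial.coeff_smul, MvPolynomial.coeff_X', smul_eq_mul] at this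
    rw [Finset.sum_eq_single i] at this
    · simpa using this
    · intro j _ hj
      simp [Finsupp.single_left_inj, hj]
    · intro hi
      simp [Finsupp.notMem_support_iff.mp hi]
  simpa using congrArg (Module.Basis.ofVectorSpace ℂ M).repr.symm hrepr

lemma SymmAlg.eq_zero_of_symι_mul {m : M} (hm : m ≠ 0) {Q : SymmAlg ℂ M}
    (h : symι ℂ M m * Q = 0) : Q = 0 := by
  have := congrArg toPoly h
  rw [map_mul, map_zero] at this
  rcases mul_eq_zero.mp this with h1 | h2
  · exact absurd h1 (toPoly_symι_ne_zero hm)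
  · rw [← fromPoly_toPoly Q, h2, map_zero]
end domain

section geom
variable {h : Type*} [AddCommGroup h] [Module ℂ h] [FiniteDimensional ℂ h]

lemma reflection_formula (s : h ≃ₗ[ℂ] h) (hcr : IsComplexReflection s)
    (α : h) (ζ : ℂ) (αv : Module.Dual ℂ h) (η : ℂ)
    (hα0 : α ≠ 0) (hζ : ζ ≠ 1) (hsα : s α = ζ • α)
    (hαv0 : αv ≠ 0) (hη : η ≠ 1) (hαvs : ∀ v : h, αv (s.symm v) = η * αv v)
    (hp : αv α ≠ 0) (v : h) :
    s v = v - ((1 - ζ) * (αv v / αv α)) • α := by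
  set H := LinearMap.ker (s.toLinearMap - LinearMap.id) with hH
  have hmem : ∀ u : h, u ∈ H ↔ s u = u := by
    intro u
    rw [hH, LinearMap.mem_ker, LinearMap.sub_apply, LinearMap.id_apply, sub_eq_zero]
    rfl
  have hle : H ≤ LinearMap.ker αv := by
    intro u hu
    have hsu : s u = u := (hmem u).mp hu
    have hsymm : s.symm u = u := by
      apply s.injective; rw [hsu]; exact (s.apply_symm_apply u)
    have := hαvs u
    rw [hsymm] at this
    have h0 : (η - 1) * αv u = 0 := by linear_combination -this
    rcases mul_eq_zero.mp h0 with h1 | h2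
    · exact absurd (by linear_combination h1) hη
    · exact h2
  have hrk : Module.finrank ℂ ↥(LinearMap.ker αv) + 1 = Module.finrank ℂ h :=
    Module.Dual.finrank_ker_add_one_of_ne_zero hαv0
  have hHeq : H = LinearMap.ker αv := by
    apply Submodule.eq_of_le_of_finrank_eq hle
    have h1 := hcr.2
    rw [← hH] at h1
    omega
  -- now the computation
  have humem : v - (αv v / αv α) • α ∈ LinearMap.ker αv := by
    rw [LinearMap.mem_ker, map_sub, map_smul, smul_eq_mul, div_mul_cancel₀ _ hp, sub_self]
  have hsu : s (v - (αv v / αv α) • α) = v - (αv v / αv α) • α :=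
    (hmem _).mp (hHeq ▸ humem)
  have : s v = v - (αv v / αv α) • α + (αv v / αv α) • (ζ • α) := by
    have := hsu
    rw [map_sub, map_smul, hsα] at this
    linear_combination (norm := module) this
  rw [this]
  module

lemma zeta_eta (s : h ≃ₗ[ℂ] h)
    (α : h) (ζ : ℂ) (αv : Module.Dual ℂ h) (η : ℂ)
    (hsα : s α = ζ • α)
    (hαvs : ∀ v : h, αv (s.symm v) = η * αv v)
    (hp : αv α ≠ 0) : ζ * η = 1 := by
  have h1 : ζ • s.symm α = α := by
    have := congrArg s.symm hsα
    rw [s.symm_apply_apply, map_smul] at this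
    exact this.symm
  have h2 := congrArg αv h1
  rw [map_smul, smul_eq_mul, hαvs] at h2
  have h3 : (ζ * η - 1) * αv α = 0 := by linear_combination h2
  rcases mul_eq_zero.mp h3 with h4 | h5
  · linear_combination h4
  · exact absurd h5 hp

lemma reflection_symm_formula (s : h ≃ₗ[ℂ] h) (hcr : IsComplexReflection s)
    (α : h) (ζ : ℂ) (αv : Module.Dual ℂ h) (η : ℂ)
    (hα0 : α ≠ 0) (hζ : ζ ≠ 1) (hsα : s α = ζ • α)
    (hαv0 : αv ≠ 0) (hη : η ≠ 1) (hαvs : ∀ v : h, αv (s.symm v) = η * αv v)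
    (hp : αv α ≠ 0) (v : h) :
    s.symm v = v - ((1 - η) * (αv v / αv α)) • α := by
  have hze := zeta_eta s α ζ αv η hsα hαvs hp
  have h1 := reflection_formula s hcr α ζ αv η hα0 hζ hsα hαv0 hη hαvs hp (s.symm v)
  rw [s.apply_symm_apply, hαvs] at h1
  have : s.symm v = v + ((1 - ζ) * (η * αv v / αv α)) • α := by
    linear_combination (norm := module) -h1
  rw [this]
  have hc : (1 - ζ) * (η * αv v / αv α) = -((1 - η) * (αv v / αv α)) := by
    have hzη : (1 - ζ) * η = -(1 - η) := by linear_combination -hze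
    linear_combination (αv v / αv α) * hzη
  rw [hc]
  module

lemma dual_formula (s : h ≃ₗ[ℂ] h) (hcr : IsComplexReflection s)
    (α : h) (ζ : ℂ) (αv : Module.Dual ℂ h) (η : ℂ)
    (hα0 : α ≠ 0) (hζ : ζ ≠ 1) (hsα : s α = ζ • α)
    (hαv0 : αv ≠ 0) (hη : η ≠ 1) (hαvs : ∀ v : h, αv (s.symm v) = η * αv v)
    (hp : αv α ≠ 0) (f : Module.Dual ℂ h) :
    f ∘ₗ (s.symm : h →ₗ[ℂ] h) = f - ((1 - η) * (f α / αv α)) • αv := by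
  ext v
  have h1 := reflection_symm_formula s hcr α ζ αv η hα0 hζ hsα hαv0 hη hαvs hp v
  simp only [LinearMap.comp_apply, LinearMap.sub_apply, LinearMap.smul_apply, smul_eq_mul,
    LinearEquiv.coe_coe]
  rw [h1, map_sub, map_smul, smul_eq_mul]
  ring


end geom

end CherednikAux


namespace CherednikAux
section core
variable {M : Type*} [AddCommGroup M] [Module ℂ M] {A : Type*} [Ring A] [Algebra ℂ A]

/-- The core commutator induction. -/
lemma core {ι' : Type*} (S' : Finset ι')
    (Φ : SymmAlg ℂ M →ₐ[ℂ] A)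
    (σ : ι' → (SymmAlg ℂ M →ₐ[ℂ] SymmAlg ℂ M))
    (g : ι' → A) (β : ι' → M) (ν μ : ι' → ℂ)
    {T : Type*} (u : T → A) (lam : ι' → T → ℂ) (δ : ι' → M → ℂ)
    (hconj : ∀ s ∈ S', ∀ p, g s * Φ p = Φ (σ s p) * g s)
    (hbase : ∀ (m : M) (t : T),
      Φ (symι ℂ M m) * u t - u t * Φ (symι ℂ M m) = ∑ s ∈ S', (lam s t * δ s m) • g s)
    (hgeom : ∀ s ∈ S', ∀ m : M,
      μ s • (symι ℂ M m - σ s (symι ℂ M m)) = (ν s * δ s m) • symι ℂ M (β s))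
    (p : SymmAlg ℂ M) :
    ∃ Q : ι' → SymmAlg ℂ M,
      (∀ t, Φ p * u t - u t * Φ p = ∑ s ∈ S', lam s t • (Φ (Q s) * g s)) ∧
      (∀ s ∈ S', μ s • (p - σ s p) = ν s • (symι ℂ M (β s) * Q s)) := by
  induction p using SymmAlg.induction with
  | halg r =>
    refine ⟨0, fun t => ?_, fun s hs => ?_⟩
    · rw [AlgHom.commutes, Algebra.commutes r (u t), sub_self]
      symm
      refine Finset.sum_eq_zero fun s hs => ?_
      simp
    · simp [AlgHom.commutes]
  | hι m =>
    refine ⟨fun s => algebraMap ℂ _ (δ s m), fun t => ?_, fun s hs => ?_⟩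
    · rw [hbase m t]
      refine Finset.sum_congr rfl fun s hs => ?_
      rw [AlgHom.commutes, ← Algebra.smul_def, smul_smul]
    · rw [hgeom s hs m, ← Algebra.commutes (δ s m), ← Algebra.smul_def, smul_smul]
  | hmul p q hp hq =>
    obtain ⟨Qp, hp1, hp2⟩ := hp
    obtain ⟨Qq, hq1, hq2⟩ := hq
    refine ⟨fun s => p * Qq s + Qp s * σ s q, fun t => ?_, fun s hs => ?_⟩
    · have e : Φ (p * q) * u t - u t * Φ (p * q)
          = Φ p * (Φ q * u t - u t * Φ q) + (Φ p * u t - u t * Φ p) * Φ q := by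
        rw [map_mul]; noncomm_ring
      rw [e, hp1 t, hq1 t, Finset.mul_sum, Finset.sum_mul, ← Finset.sum_add_distrib]
      refine Finset.sum_congr rfl fun s hs => ?_
      rw [mul_smul_comm, smul_mul_assoc, ← smul_add]
      congr 1
      simp only [map_add, map_mul, add_mul, mul_assoc]
      rw [hconj s hs q]
    · have e : μ s • (p * q - σ s (p * q))
          = p * (μ s • (q - σ s q)) + (μ s • (p - σ s p)) * σ s q := by
        rw [map_mul, mul_smul_comm, smul_mul_assoc, ← smul_add]
        congr 1
        ring
      rw [e, hp2 s hs, hq2 s hs, mul_smul_comm, smul_mul_assoc, ← smul_add]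
      congr 1
      ring
  | hadd p q hp hq =>
    obtain ⟨Qp, hp1, hp2⟩ := hp
    obtain ⟨Qq, hq1, hq2⟩ := hq
    refine ⟨fun s => Qp s + Qq s, fun t => ?_, fun s hs => ?_⟩
    · have e : Φ (p + q) * u t - u t * Φ (p + q)
          = (Φ p * u t - u t * Φ p) + (Φ q * u t - u t * Φ q) := by
        rw [map_add]; noncomm_ring
      rw [e, hp1 t, hq1 t, ← Finset.sum_add_distrib]
      refine Finset.sum_congr rfl fun s hs => ?_
      rw [map_add, add_mul, smul_add]
    · have e : μ s • (p + q - σ s (p + q))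
          = μ s • (p - σ s p) + μ s • (q - σ s q) := by
        rw [map_add, ← smul_add]
        congr 1
        ring
      rw [e, hp2 s hs, hq2 s hs, mul_add, smul_add]
end core

section cher
variable {h : Type*} [AddCommGroup h] [Module ℂ h]
variable (W : Subgroup (h ≃ₗ[ℂ] h)) (S : Finset ↥W)
    (α : ↥W → h) (αv : ↥W → Module.Dual ℂ h) (c : ↥W → ℂ)

lemma cher_induction {motive : CherednikAlgebra W S α αv c → Prop}
    (halg : ∀ r : ℂ, motive (algebraMap ℂ _ r))
    (hX : ∀ v, motive (elX W S α αv c v))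
    (hY : ∀ f, motive (elY W S α αv c f))
    (hG : ∀ w, motive (elG W S α αv c w))
    (hmul : ∀ a b, motive a → motive b → motive (a * b))
    (hadd : ∀ a b, motive a → motive b → motive (a + b))
    (a : CherednikAlgebra W S α αv c) : motive a := by
  obtain ⟨a, rfl⟩ := RingQuot.mkAlgHom_surjective ℂ _ a
  refine FreeAlgebra.induction ℂ _ (fun r => by simpa using halg r) (fun z => ?_)
    (fun a b ha hb => by rw [map_mul]; exact hmul _ _ ha hb)
    (fun a b ha hb => by rw [map_add]; exact hadd _ _ ha hb) a
  rcases z with v | f | w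
  · exact hX v
  · exact hY f
  · exact hG w

lemma elG_mul_elX (w : ↥W) (v : h) :
    elG W S α αv c w * elX W S α αv c v
      = elX W S α αv c ((w : h ≃ₗ[ℂ] h) v) * elG W S α αv c w := by
  have := RingQuot.mkAlgHom_rel ℂ (CherednikRel.g_x (S := S) (α := α) (αv := αv) (c := c) w v)
  simp only [map_mul] at this; exact this

lemma elG_mul_elY (w : ↥W) (f : Module.Dual ℂ h) :
    elG W S α αv c w * elY W S α αv c f
      = elY W S α αv c (f ∘ₗ ((w : h ≃ₗ[ℂ] h).symm : h →ₗ[ℂ] h)) * elG W S α αv c w := by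
  have := RingQuot.mkAlgHom_rel ℂ (CherednikRel.g_y (S := S) (α := α) (αv := αv) (c := c) w f)
  simp only [map_mul] at this; exact this

lemma main_rel (v : h) (f : Module.Dual ℂ h) :
    elX W S α αv c v * elY W S α αv c f - elY W S α αv c f * elX W S α αv c v
      = ∑ s ∈ S, (c s * (f (α s) * αv s v / αv s (α s))) • elG W S α αv c s := by
  have := RingQuot.mkAlgHom_rel ℂ (CherednikRel.main (S := S) (α := α) (αv := αv) (c := c) v f)
  simp only [map_sub, map_mul, map_sum, map_smul] at this; exact this

lemma conjX (Φ : SymmAlg ℂ h →ₐ[ℂ] CherednikAlgebra W S α αv c)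
    (hΦ : ∀ x : h, Φ (symι ℂ h x) = elX W S α αv c x)
    (actX : ↥W → (SymmAlg ℂ h →ₐ[ℂ] SymmAlg ℂ h))
    (hactX : ∀ (w : ↥W) (x : h), actX w (symι ℂ h x) = symι ℂ h ((w : h ≃ₗ[ℂ] h) x))
    (w : ↥W) (p : SymmAlg ℂ h) :
    elG W S α αv c w * Φ p = Φ (actX w p) * elG W S α αv c w := by
  induction p using SymmAlg.induction with
  | halg r => rw [AlgHom.commutes, AlgHom.commutes, AlgHom.commutes, Algebra.commutes]
  | hι m => rw [hΦ, hactX, hΦ]; exact elG_mul_elX W S α αv c w m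
  | hmul p q hp hq =>
    rw [map_mul, map_mul, map_mul, ← mul_assoc, hp, mul_assoc, hq, ← mul_assoc]
  | hadd p q hp hq =>
    rw [map_add, map_add, map_add, mul_add, add_mul, hp, hq]

lemma conjY (Ψ : SymmAlg ℂ (Module.Dual ℂ h) →ₐ[ℂ] CherednikAlgebra W S α αv c)
    (hΨ : ∀ f : Module.Dual ℂ h, Ψ (symι ℂ (Module.Dual ℂ h) f) = elY W S α αv c f)
    (actY : ↥W → (SymmAlg ℂ (Module.Dual ℂ h) →ₐ[ℂ] SymmAlg ℂ (Module.Dual ℂ h)))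
    (hactY : ∀ (w : ↥W) (f : Module.Dual ℂ h),
      actY w (symι ℂ (Module.Dual ℂ h) f) =
        symι ℂ (Module.Dual ℂ h) (f ∘ₗ ((w : h ≃ₗ[ℂ] h).symm : h →ₗ[ℂ] h)))
    (w : ↥W) (p : SymmAlg ℂ (Module.Dual ℂ h)) :
    elG W S α αv c w * Ψ p = Ψ (actY w p) * elG W S α αv c w := by
  induction p using SymmAlg.induction with
  | halg r => rw [AlgHom.commutes, AlgHom.commutes, AlgHom.commutes, Algebra.commutes]
  | hι m => rw [hΨ, hactY, hΨ]; exact elG_mul_elY W S α αv c w m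
  | hmul p q hp hq =>
    rw [map_mul, map_mul, map_mul, ← mul_assoc, hp, mul_assoc, hq, ← mul_assoc]
  | hadd p q hp hq =>
    rw [map_add, map_add, map_add, mul_add, add_mul, hp, hq]

end cher
end CherednikAux

open CherednikAux

/-- the images in `H_c` of the `W`-invariant polynomials in
`ℂ[h*] = Sym(h)` and in `ℂ[h] = Sym(h*)` are central in `H_c`. -/
theorem invariants_are_central
    {h : Type*} [AddCommGroup h] [Module ℂ h] [FiniteDimensional ℂ h]
    -- `W` is a finite subgroup of `GL(h)` generated by the set `S` of
    -- complex reflections it contains: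
    (W : Subgroup (h ≃ₗ[ℂ] h)) [Finite ↥W]
    (S : Finset ↥W)
    (hS : ∀ s : ↥W, s ∈ S ↔ IsComplexReflection (s : h ≃ₗ[ℂ] h))
    (hgen : Subgroup.closure {s : h ≃ₗ[ℂ] h | s ∈ W ∧ IsComplexReflection s} = W)
    -- eigen-data for the reflections:
    (α : ↥W → h) (ζ : ↥W → ℂ) (αv : ↥W → Module.Dual ℂ h) (η : ↥W → ℂ)
    (hα : ∀ s ∈ S, α s ≠ 0 ∧ ζ s ≠ 1 ∧ (s : h ≃ₗ[ℂ] h) (α s) = ζ s • α s)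
    (hαv : ∀ s ∈ S, αv s ≠ 0 ∧ η s ≠ 1 ∧
      (∀ v : h, αv s ((s : h ≃ₗ[ℂ] h).symm v) = η s * αv s v))
    (hpair : ∀ s ∈ S, αv s (α s) ≠ 0)
    -- the parameter `c` is invariant under `W`-conjugation:
    (c : ↥W → ℂ)
    (hc : ∀ w s : ↥W, s ∈ S → (w * s * w⁻¹ ∈ S ∧ c (w * s * w⁻¹) = c s))
    -- `Φ` is the canonical algebra homomorphism `Sym(h) = ℂ[h*] → H_c`:
    (Φ : SymmAlg ℂ h →ₐ[ℂ] CherednikAlgebra W S α αv c)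
    (hΦ : ∀ x : h, Φ (symι ℂ h x) = elX W S α αv c x)
    -- `Ψ` is the canonical algebra homomorphism `Sym(h*) = ℂ[h] → H_c`:
    (Ψ : SymmAlg ℂ (Module.Dual ℂ h) →ₐ[ℂ] CherednikAlgebra W S α αv c)
    (hΨ : ∀ f : Module.Dual ℂ h, Ψ (symι ℂ (Module.Dual ℂ h) f) = elY W S α αv c f)
    -- `actX w` is the algebra automorphism of `Sym(h)` induced by `w ∈ W`:
    (actX : ↥W → (SymmAlg ℂ h →ₐ[ℂ] SymmAlg ℂ h))
    (hactX : ∀ (w : ↥W) (x : h), actX w (symι ℂ h x) = symι ℂ h ((w : h ≃ₗ[ℂ] h) x))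
    -- `actY w` is the algebra automorphism of `Sym(h*)` induced by the
    -- contragredient action `(w·f)(v) = f(w⁻¹ v)` of `w ∈ W` on `h*`:
    (actY : ↥W → (SymmAlg ℂ (Module.Dual ℂ h) →ₐ[ℂ] SymmAlg ℂ (Module.Dual ℂ h)))
    (hactY : ∀ (w : ↥W) (f : Module.Dual ℂ h),
      actY w (symι ℂ (Module.Dual ℂ h) f) =
        symι ℂ (Module.Dual ℂ h) (f ∘ₗ ((w : h ≃ₗ[ℂ] h).symm : h →ₗ[ℂ] h))) :
    (∀ p : SymmAlg ℂ h, (∀ w : ↥W, actX w p = p) →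
      Φ p ∈ Subalgebra.center ℂ (CherednikAlgebra W S α αv c)) ∧
    (∀ q : SymmAlg ℂ (Module.Dual ℂ h), (∀ w : ↥W, actY w q = q) →
      Ψ q ∈ Subalgebra.center ℂ (CherednikAlgebra W S α αv c)) := by
  classical
  constructor
  · intro p hinv
    obtain ⟨Q, hQ1, hQ2⟩ := core S Φ actX (elG W S α αv c) α (fun s => 1 - ζ s)
      (fun s => αv s (α s)) (elY W S α αv c)
      (fun s f => c s * f (α s) / αv s (α s)) (fun s v => αv s v)
      (fun s _ p => conjX W S α αv c Φ hΦ actX hactX s p)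
      (fun m f => by
        rw [hΦ m, main_rel W S α αv c m f]
        refine Finset.sum_congr rfl fun s hs => ?_
        congr 1
        ring)
      (fun s hs m => by
        have hcr := (hS s).mp hs
        obtain ⟨hα0, hζ1, hsα⟩ := hα s hs
        obtain ⟨hαv0, hη1, hαvs⟩ := hαv s hs
        have hp := hpair s hs
        rw [hactX, reflection_formula (s : h ≃ₗ[ℂ] h) hcr (α s) (ζ s) (αv s) (η s)
          hα0 hζ1 hsα hαv0 hη1 hαvs hp m, map_sub, map_smul, sub_sub_cancel, smul_smul]
        congr 1
        field_simp) p
    have hQ0 : ∀ s ∈ S, Q s = 0 := by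
      intro s hs
      have h2 := hQ2 s hs
      rw [hinv s, sub_self, smul_zero] at h2
      have hν : (1 : ℂ) - ζ s ≠ 0 := sub_ne_zero.mpr (Ne.symm (hα s hs).2.1)
      have h3 := (smul_eq_zero.mp h2.symm).resolve_left hν
      exact SymmAlg.eq_zero_of_symι_mul (hα s hs).1 h3
    rw [Subalgebra.mem_center_iff]
    intro b
    induction b using cher_induction with
    | halg r => exact Algebra.commutes r _
    | hX v => rw [← hΦ v, ← map_mul, ← map_mul, SymmAlg.mul_comm]
    | hY f =>
      have h1 := hQ1 f
      have hsum : ∑ s ∈ S, (c s * f (α s) / αv s (α s)) • (Φ (Q s) * elG W S α αv c s) = 0 :=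
        Finset.sum_eq_zero fun s hs => by rw [hQ0 s hs, map_zero, zero_mul, smul_zero]
      rw [hsum] at h1
      exact (sub_eq_zero.mp h1).symm
    | hG w => rw [conjX W S α αv c Φ hΦ actX hactX w p, hinv w]
    | hmul a b ha hb => rw [mul_assoc, hb, ← mul_assoc, ha, mul_assoc]
    | hadd a b ha hb => rw [add_mul, mul_add, ha, hb]
  · intro p hinv
    obtain ⟨Q, hQ1, hQ2⟩ := core S Ψ actY (elG W S α αv c) αv (fun s => 1 - η s)
      (fun s => αv s (α s)) (elX W S α αv c)
      (fun s v => -(c s * αv s v / αv s (α s))) (fun s f => f (α s))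
      (fun s _ p => conjY W S α αv c Ψ hΨ actY hactY s p)
      (fun f v => by
        rw [hΨ f]
        have hm := main_rel W S α αv c v f
        have e : elY W S α αv c f * elX W S α αv c v - elX W S α αv c v * elY W S α αv c f
            = -(elX W S α αv c v * elY W S α αv c f - elY W S α αv c f * elX W S α αv c v) := by
          noncomm_ring
        rw [e, hm, ← Finset.sum_neg_distrib]
        refine Finset.sum_congr rfl fun s hs => ?_
        rw [(neg_smul (c s * (f (α s) * αv s v / αv s (α s))) (elG W S α αv c s)).symm]
        congr 1
        ring)
      (fun s hs f => by
        have hcr := (hS s).mp hs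
        obtain ⟨hα0, hζ1, hsα⟩ := hα s hs
        obtain ⟨hαv0, hη1, hαvs⟩ := hαv s hs
        have hp := hpair s hs
        rw [hactY, dual_formula (s : h ≃ₗ[ℂ] h) hcr (α s) (ζ s) (αv s) (η s)
          hα0 hζ1 hsα hαv0 hη1 hαvs hp f, map_sub, map_smul, sub_sub_cancel, smul_smul]
        congr 1
        field_simp) p
    have hQ0 : ∀ s ∈ S, Q s = 0 := by
      intro s hs
      have h2 := hQ2 s hs
      rw [hinv s, sub_self, smul_zero] at h2
      have hν : (1 : ℂ) - η s ≠ 0 := sub_ne_zero.mpr (Ne.symm (hαv s hs).2.1)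
      have h3 := (smul_eq_zero.mp h2.symm).resolve_left hν
      exact SymmAlg.eq_zero_of_symι_mul (hαv s hs).1 h3
    rw [Subalgebra.mem_center_iff]
    intro b
    induction b using cher_induction with
    | halg r => exact Algebra.commutes r _
    | hY f => rw [← hΨ f, ← map_mul, ← map_mul, SymmAlg.mul_comm]
    | hX v =>
      have h1 := hQ1 v
      have hsum : ∑ s ∈ S, (-(c s * αv s v / αv s (α s))) • (Ψ (Q s) * elG W S α αv c s) = 0 :=
        Finset.sum_eq_zero fun s hs => by rw [hQ0 s hs, map_zero, zero_mul, smul_zero]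
      rw [hsum] at h1
      exact (sub_eq_zero.mp h1).symm
    | hG w => rw [conjY W S α αv c Ψ hΨ actY hactY w p, hinv w]
    | hmul a b ha hb => rw [mul_assoc, hb, ← mul_assoc, ha, mul_assoc]
    | hadd a b ha hb => rw [add_mul, mul_add, ha, hb]
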